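/- Let α ∈ (0,1) and z > 0 satisfy Φ̄(z) = α/2 (i.e. Φ(z) = 1 − α/2), and define g(ω) = z/√ω + (2/α)·( φ(z/√ω) − (z/√ω)·Φ̄(z/√ω) ) for ω > 0. Then g'(1) = 0, i.e. ω = 1 is a critical point of g. -/

import Mathlib

open MeasureTheory ProbabilityTheory Set

/-- The standard normal density `φ(t) = (2π)^{-1/2} exp(-t²/2)`. -/
noncomputable def phi (t : ℝ) : ℝ := (Real.sqrt (2 * Real.pi))⁻¹ * Real.exp (-t ^ 2 / 2)

/-- The standard normal cumulative distribution function `Φ`. -/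
noncomputable def Phi (t : ℝ) : ℝ := ((gaussianReal 0 1) (Iic t)).toReal

/-- The expected-interval-score factor `g(ω) = z/√ω + (2/α)(φ(z/√ω) − (z/√ω) Φ̄(z/√ω))`. -/
noncomputable def g (z α ω : ℝ) : ℝ :=
  z / Real.sqrt ω
    + (2 / α) * (phi (z / Real.sqrt ω) - (z / Real.sqrt ω) * (1 - Phi (z / Real.sqrt ω)))

lemma pdf_eq : gaussianPDFReal 0 1 = phi := by
  funext x; simp [gaussianPDFReal, phi]

lemma phi_cont : Continuous phi := by
  unfold phi; fun_prop

lemma phi_integrable : Integrable phi := pdf_eq ▸ integrable_gaussianPDFReal 0 1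

lemma Phi_eq (t : ℝ) : Phi t = ∫ x in Iic t, phi x := by
  rw [Phi, gaussianReal_apply_eq_integral 0 one_ne_zero, ENNReal.toReal_ofReal, pdf_eq]
  rw [pdf_eq]
  exact setIntegral_nonneg measurableSet_Iic fun x _ => by unfold phi; positivity

lemma Phi_hasDerivAt (t : ℝ) : HasDerivAt Phi (phi t) t := by
  have h : Phi = fun t => (∫ x in Iic (0:ℝ), phi x) + ∫ x in (0:ℝ)..t, phi x := by
    funext t
    rw [Phi_eq, ← intervalIntegral.integral_Iic_sub_Iic (phi_integrable.integrableOn)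
      (phi_integrable.integrableOn)]
    ring
  rw [h]
  exact (intervalIntegral.integral_hasDerivAt_right phi_integrable.intervalIntegrable
    phi_cont.aestronglyMeasurable.stronglyMeasurableAtFilter phi_cont.continuousAt).const_add _

lemma phi_hasDerivAt (t : ℝ) : HasDerivAt phi (-t * phi t) t := by
  have h : HasDerivAt (fun t : ℝ => -t ^ 2 / 2) (-t) t := by
    have := ((hasDerivAt_pow 2 t).neg).div_const 2
    simpa using this.congr_deriv (by ring)
  have := (h.exp).const_mul (Real.sqrt (2 * Real.pi))⁻¹
  unfold phi
  convert this using 1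
  · rfl
  · rfl
  ring

/-- If `Φ̄(z) = α/2`, then `ω = 1` is a critical point of `g`: `g'(1) = 0`. -/
theorem stmt12 (α z : ℝ) (hα : α ∈ Ioo (0 : ℝ) 1) (hz : 0 < z)
    (hzα : 1 - Phi z = α / 2) :
    HasDerivAt (g z α) 0 1 := by
  have hα0 : α ≠ 0 := ne_of_gt hα.1
  -- inner function u(ω) = z / √ω, derivative at 1 is -z/2
  have hu : HasDerivAt (fun ω : ℝ => z / Real.sqrt ω) (-z / 2) 1 := by
    have hs : HasDerivAt Real.sqrt (1 / (2 * Real.sqrt 1)) 1 := Real.hasDerivAt_sqrt one_ne_zero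
    have := (hasDerivAt_const (1:ℝ) z).div hs (by simp)
    convert this using 1
    · rfl
    · rfl
    · rfl
    simp
    ring
  -- outer function F(u)
  have hF : HasDerivAt (fun u : ℝ => u + (2 / α) * (phi u - u * (1 - Phi u))) 0 z := by
    have h1 : HasDerivAt (fun u : ℝ => u * (1 - Phi u)) ((1 - Phi z) + z * (-phi z)) z := by
      have := (hasDerivAt_id z).mul ((hasDerivAt_const z (1:ℝ)).sub (Phi_hasDerivAt z))
      convert this using 1
      · rfl
      · rfl
      · rfl
      simp [mul_comm]
    have h2 : HasDerivAt (fun u : ℝ => phi u - u * (1 - Phi u))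
        (-z * phi z - ((1 - Phi z) + z * (-phi z))) z := (phi_hasDerivAt z).sub h1
    have := (hasDerivAt_id z).add (h2.const_mul (2 / α))
    convert this using 1
    · rfl
    · rfl
    · rfl
    rw [hzα]
    field_simp
    ring
  have hF' : HasDerivAt (fun u : ℝ => u + (2 / α) * (phi u - u * (1 - Phi u))) 0
      (z / Real.sqrt 1) := by simpa using hF
  have := hF'.comp 1 hu
  exact this.congr_deriv (by ring)
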